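/- Let d ≥ 2, k ≥ 2 and suppose L ⊆ {1,…,k}^d is a gapped language: for each coordinate i, either no word of L has value k-1 at i, or no word of L has value k at i. Let 0 < ε ≤ 1/S² for some integer S ≥ k, and let Q(w) = I^(k)(w_1) × ⋯ × I^(k)(w_d) with I^(k)(j) = (x^(k)(j), y^(k)(j)) as defined by x^(k)(j) = (j-1)(1+ε)/k for j < k, x^(k)(k) = 1 - (1+ε)/k, y^(k)(j) = x^(k)(j) + (1+ε)/k. Then for any distinct words w, w' ∈ L, the open cubes Q(w) and Q(w') are disjoint. -/

import Mathlib

/-- Base point `x^(k)(j)` for `1 ≤ j ≤ k`. -/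
noncomputable def xpt (ε : ℝ) (k j : ℕ) : ℝ :=
  if j < k then ((j : ℝ) - 1) * (1 + ε) / k else 1 - (1 + ε) / k

/-- Upper point `y^(k)(j) = x^(k)(j) + (1+ε)/k`. -/
noncomputable def ypt (ε : ℝ) (k j : ℕ) : ℝ := xpt ε k j + (1 + ε) / k

/-- The open box `Q^(k)(w) = Π_i (x^(k)(w_i), y^(k)(w_i))`. -/
noncomputable def Qbox (d k : ℕ) (ε : ℝ) (w : Fin d → ℕ) : Set (Fin d → ℝ) :=
  Set.pi Set.univ fun i => Set.Ioo (xpt ε k (w i)) (ypt ε k (w i))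

lemma interval_sep (k S : ℕ) (ε : ℝ) (hk : 2 ≤ k) (hkS : k ≤ S)
    (hε0 : 0 < ε) (hεS : ε ≤ 1 / (S : ℝ) ^ 2)
    (j j' : ℕ) (hj1 : 1 ≤ j) (hjj' : j < j') (hj'k : j' ≤ k)
    (hnot : ¬ (j = k - 1 ∧ j' = k)) :
    ypt ε k j ≤ xpt ε k j' := by
  have hkpos : (0:ℝ) < k := by positivity
  have hSpos : (0:ℝ) < S := by
    have : 0 < S := by omega
    exact_mod_cast this
  have hjk : j < k := lt_of_lt_of_le hjj' hj'k
  have hkS' : (k:ℝ) ≤ S := by exact_mod_cast hkS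
  rcases lt_or_eq_of_le hj'k with h | h
  · -- j' < k
    rw [ypt, xpt, xpt, if_pos hjk, if_pos h]
    have : (j:ℝ) ≤ (j':ℝ) - 1 := by
      have : j + 1 ≤ j' := hjj'
      have := (Nat.cast_le (α := ℝ)).2 this
      push_cast at this
      linarith
    have h1ε : (0:ℝ) < 1 + ε := by linarith
    rw [← add_div]
    gcongr
    nlinarith [mul_le_mul_of_nonneg_right this h1ε.le]
  · -- j' = k, so j ≤ k - 2
    have hj2 : j ≤ k - 2 := by omega
    have hj2' : (j:ℝ) + 1 ≤ (k:ℝ) - 1 := by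
      have : j + 1 ≤ k - 1 := by omega
      have := (Nat.cast_le (α := ℝ)).2 this
      push_cast [Nat.cast_sub (by omega : 1 ≤ k)] at this
      linarith
    rw [h, ypt, xpt, xpt, if_pos hjk, if_neg (lt_irrefl k)]
    -- need (j-1)(1+ε)/k + (1+ε)/k ≤ 1 - (1+ε)/k, i.e. (j+1)(1+ε) ≤ k
    have hkey : ((k:ℝ) - 1) * ε ≤ 1 := by
      have h1 : ((k:ℝ) - 1) * ε ≤ ((k:ℝ) - 1) * (1 / (S:ℝ)^2) := by
        apply mul_le_mul_of_nonneg_left hεS (by linarith)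
      have h2 : ((k:ℝ) - 1) ≤ (S:ℝ)^2 := by nlinarith
      calc ((k:ℝ) - 1) * ε ≤ ((k:ℝ) - 1) * (1 / (S:ℝ)^2) := h1
        _ = ((k:ℝ) - 1) / (S:ℝ)^2 := by ring
        _ ≤ 1 := by
          rw [div_le_one (by positivity)]
          exact h2
    have : ((j:ℝ) + 1) * (1 + ε) ≤ k := by nlinarith
    have hc : (1 + ε) / (k:ℝ) * k = 1 + ε := div_mul_cancel₀ _ (ne_of_gt hkpos)
    rw [← add_div, div_le_iff₀ hkpos]
    nlinarith [hc, this]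

theorem stmt_11 (d k S : ℕ) (ε : ℝ) (hd : 2 ≤ d) (hk : 2 ≤ k) (hkS : k ≤ S)
    (hε0 : 0 < ε) (hεS : ε ≤ 1 / (S : ℝ) ^ 2)
    (L : Set (Fin d → ℕ))
    (hrange : ∀ w ∈ L, ∀ i, 1 ≤ w i ∧ w i ≤ k)
    (hgapped : ∀ i : Fin d, (∀ w ∈ L, w i ≠ k - 1) ∨ (∀ w ∈ L, w i ≠ k)) :
    ∀ w ∈ L, ∀ w' ∈ L, w ≠ w' → Disjoint (Qbox d k ε w) (Qbox d k ε w') := by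
  intro w hw w' hw' hne
  obtain ⟨i, hi⟩ : ∃ i, w i ≠ w' i := by
    by_contra h
    push_neg at h
    exact hne (funext h)
  have key : ∀ u v : Fin d → ℕ, u ∈ L → v ∈ L → u i < v i →
      ypt ε k (u i) ≤ xpt ε k (v i) := by
    intro u v hu hv hlt
    apply interval_sep k S ε hk hkS hε0 hεS _ _ (hrange u hu i).1 hlt (hrange v hv i).2
    rintro ⟨h1, h2⟩
    rcases hgapped i with hg | hg
    · exact hg u hu h1
    · exact hg v hv h2
  rw [Set.disjoint_left]
  intro a ha hb
  have ha' := ha i (Set.mem_univ i)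
  have hb' := hb i (Set.mem_univ i)
  rcases lt_or_gt_of_ne hi with h | h
  · have := key w w' hw hw' h
    linarith [ha'.2, hb'.1]
  · have := key w' w hw' hw h
    linarith [ha'.1, hb'.2]
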